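/- For any nonnegative integer n, positive integer d, and real x, the sum over i from 0 to d-1 of \overline{B}_n((x+i)/d) equals d^{1-n} \overline{B}_n(x), where \overline{B}_n(x) = B_n(x - \lfloor x \rfloor) is the n-th Bernoulli function. -/

import Mathlib

noncomputable section

/-- Signed Stirling numbers of the first kind. -/
def stirling1 : ℕ → ℕ → ℤ
  | 0, 0 => 1
  | 0, _ + 1 => 0
  | _ + 1, 0 => 0
  | n + 1, m + 1 => stirling1 n m - n * stirling1 n (m + 1)

/-- `n!`-normalized coefficients of `Ei_k (log (1+t))`. -/
def polyExpCoeff (k : ℤ) (n : ℕ) : ℚ :=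
  ∑ m ∈ Finset.Icc 1 n, (stirling1 n m : ℚ) / (m : ℚ) ^ (k - 1)

/-- Type 2 poly-Bernoulli numbers of index `k`, defined by the recursion coming from the
generating function `Ei_k (log (1+t)) / (e^t - 1) = ∑ B_n^{(k)} t^n/n!`. -/
def polyBernoulli (k : ℤ) : ℕ → ℚ
  | n =>
    (polyExpCoeff k (n + 1) -
      ∑ l ∈ (Finset.range n).attach, ((n + 1).choose l.1 : ℚ) * polyBernoulli k l.1) / (n + 1)
  termination_by n => n
  decreasing_by exact Finset.mem_range.mp l.2

/-- Type 2 poly-Bernoulli polynomials of index `k`, as functions on `ℝ`. -/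
def polyBernoulliPoly (k : ℤ) (n : ℕ) (x : ℝ) : ℝ :=
  ∑ l ∈ Finset.range (n + 1), (n.choose l : ℝ) * (polyBernoulli k l : ℝ) * x ^ (n - l)

/-- Bernoulli polynomials as functions on `ℝ`. -/
def bernoulliPolyFun (n : ℕ) (x : ℝ) : ℝ :=
  ∑ l ∈ Finset.range (n + 1), (n.choose l : ℝ) * (bernoulli l : ℝ) * x ^ (n - l)

/-- Bernoulli functions `B̄_n(x) = B_n(⟨x⟩)`. -/
def bernoulliBar (n : ℕ) (x : ℝ) : ℝ := bernoulliPolyFun n (Int.fract x)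

/-- Type 2 poly-Bernoulli functions `B̄_n^{(k)}(x) = B_n^{(k)}(⟨x⟩)`. -/
def polyBernoulliBar (k : ℤ) (n : ℕ) (x : ℝ) : ℝ := polyBernoulliPoly k n (Int.fract x)

/-- Poly-Dedekind sums `S_p^{(k)}(h,m)`. -/
def polyDedekindSum (k : ℤ) (p h m : ℕ) : ℝ :=
  ∑ μ ∈ Finset.Ico 1 m, (μ / m : ℝ) * polyBernoulliBar k p (h * μ / m)

/-- Apostol's generalized Dedekind sums `S_p(h,m)`. -/
def genDedekindSum (p h m : ℕ) : ℝ :=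
  ∑ μ ∈ Finset.Ico 1 m, (μ / m : ℝ) * bernoulliBar p (h * μ / m)

/-- The polyexponential function `Ei_k`. -/
def polyExp (k : ℤ) (x : ℝ) : ℝ :=
  ∑' n : ℕ, x ^ (n + 1) / ((n + 1 : ℝ) ^ k * (Nat.factorial n : ℝ))

/-- The sawtooth function `((x))`. -/
def sawtooth (x : ℝ) : ℝ := if Int.fract x = 0 then 0 else Int.fract x - 1 / 2

end

noncomputable section

lemma sum_shift_mod (f : ℕ → ℝ) (d : ℕ) (hd : 0 < d) (a : ℕ) :
    ∑ i ∈ Finset.range d, f ((a + i) % d) = ∑ i ∈ Finset.range d, f i := by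
  induction a with
  | zero =>
    exact Finset.sum_congr rfl fun i hi => by
      rw [zero_add, Nat.mod_eq_of_lt (Finset.mem_range.mp hi)]
  | succ a ih =>
    rw [← ih]
    have h1 : ∑ i ∈ Finset.range d, f ((a + 1 + i) % d)
        = ∑ i ∈ Finset.range d, f ((a + (i + 1)) % d) := by
      apply Finset.sum_congr rfl; intro i _; ring_nf
    have h2 := Finset.sum_range_succ' (fun j => f ((a + j) % d)) d
    have h3 := Finset.sum_range_succ (fun j => f ((a + j) % d)) d
    have h4 : (a + d) % d = (a + 0) % d := by simp [Nat.add_mod_right]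
    rw [h1]
    rw [h4] at h3
    have := h2.symm.trans h3
    simpa using this

end

noncomputable section
namespace RaabeAux

abbrev B (s : ℝ) : PowerSeries ℝ :=
  PowerSeries.mk fun n => Polynomial.aeval s ((1 / (n.factorial : ℚ)) • Polynomial.bernoulli n)

lemma rescale_pow (c : ℝ) (j : ℕ) :
    (PowerSeries.rescale c (PowerSeries.exp ℝ)) ^ j
      = PowerSeries.rescale ((j : ℝ) * c) (PowerSeries.exp ℝ) := by
  induction j with
  | zero => simp [PowerSeries.rescale_zero]
  | succ j ih =>
    rw [pow_succ, ih, PowerSeries.exp_mul_exp_eq_exp_add]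
    push_cast
    ring_nf

lemma raabe_gf (d : ℕ) (hd : 0 < d) (t : ℝ) :
    (∑ j ∈ Finset.range d, B ((t + j) / d))
      = (PowerSeries.C (d : ℝ)) * PowerSeries.rescale ((d : ℝ)⁻¹) (B t) := by
  set c : ℝ := (d : ℝ)⁻¹ with hc
  have hd0 : (d : ℝ) ≠ 0 := Nat.cast_ne_zero.mpr hd.ne'
  have hc0 : c ≠ 0 := inv_ne_zero hd0
  set E := PowerSeries.exp ℝ
  set S : PowerSeries ℝ := ∑ j ∈ Finset.range d, (PowerSeries.rescale c E) ^ j with hS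
  have hdc : (d : ℝ) * c = 1 := mul_inv_cancel₀ hd0
  -- telescoping: S * (rescale c E - 1) = E - 1
  have htel : S * (PowerSeries.rescale c E - 1) = E - 1 := by
    rw [hS, geom_sum_mul, rescale_pow]
    rw [hdc, PowerSeries.rescale_one]
    rfl
  have hgf : ∀ s : ℝ, B s * (E - 1) = PowerSeries.X * PowerSeries.rescale s E :=
    fun s => Polynomial.bernoulli_generating_function s
  -- LHS * (rescale c E - 1) * S = X * rescale (t*c) E * S
  have hL : (∑ j ∈ Finset.range d, B ((t + j) / d)) * ((PowerSeries.rescale c E - 1) * S)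
      = (PowerSeries.X * PowerSeries.rescale (t * c) E) * S := by
    rw [mul_comm (PowerSeries.rescale c E - 1) S, htel, Finset.sum_mul]
    rw [Finset.mul_sum]
    apply Finset.sum_congr rfl
    intro j _
    rw [hgf, rescale_pow]
    have : (t + j) / d = t * c + (j : ℝ) * c := by rw [hc, add_div, div_eq_mul_inv, div_eq_mul_inv]
    rw [this, ← PowerSeries.exp_mul_exp_eq_exp_add]
    ring
  -- RHS * (rescale c E - 1) = X * rescale (t*c) E
  have hR : (PowerSeries.C (d : ℝ)) * PowerSeries.rescale c (B t) * (PowerSeries.rescale c E - 1)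
      = PowerSeries.X * PowerSeries.rescale (t * c) E := by
    have h1 : PowerSeries.rescale c (B t) * (PowerSeries.rescale c E - 1)
        = PowerSeries.rescale c (B t * (E - 1)) := by
      rw [map_mul, map_sub, map_one]
    rw [mul_assoc, h1, hgf, map_mul, PowerSeries.rescale_X, PowerSeries.rescale_rescale]
    rw [← mul_assoc, ← mul_assoc, ← map_mul, hdc, map_one, one_mul]
  -- cancel
  have hSne : S ≠ 0 := by
    intro h
    have := congrArg (PowerSeries.constantCoeff (R := ℝ)) h
    rw [hS] at this
    simp only [map_sum, map_pow, map_zero] at this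
    have hcc : PowerSeries.constantCoeff (R := ℝ) (PowerSeries.rescale c E) = 1 := by
      rw [← PowerSeries.coeff_zero_eq_constantCoeff_apply]
      simp [E, PowerSeries.exp, PowerSeries.coeff_rescale]
    rw [Finset.sum_congr rfl (fun j _ => by rw [hcc, one_pow])] at this
    simp at this
    omega
  have hEne : PowerSeries.rescale c E - 1 ≠ 0 := by
    intro h
    have := congrArg (PowerSeries.coeff (R := ℝ) 1) h
    simp [E, PowerSeries.exp, PowerSeries.coeff_rescale, PowerSeries.coeff_one] at this
    exact hc0 this
  have key : ((∑ j ∈ Finset.range d, B ((t + j) / d))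
      - (PowerSeries.C (d : ℝ)) * PowerSeries.rescale c (B t))
      * ((PowerSeries.rescale c E - 1) * S) = 0 := by
    rw [sub_mul, hL]
    rw [← mul_assoc, mul_assoc _ (PowerSeries.rescale c E - 1) S,
        mul_comm (PowerSeries.rescale c E - 1) S, ← mul_assoc, mul_assoc _ S _]
    rw [mul_comm S (PowerSeries.rescale c E - 1), ← mul_assoc, hR]
    ring
  rcases mul_eq_zero.mp key with h | h
  · exact sub_eq_zero.mp h
  · exact absurd h (mul_ne_zero hEne hSne)

end RaabeAux
end

noncomputable section

lemma bernoulliPolyFun_eq_aeval (n : ℕ) (x : ℝ) :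
    bernoulliPolyFun n x = Polynomial.aeval x (Polynomial.bernoulli n) := by
  rw [bernoulliPolyFun, Polynomial.bernoulli, map_sum]
  apply Finset.sum_congr rfl
  intro i _
  rw [Polynomial.aeval_monomial]
  rw [show (algebraMap ℚ ℝ) (_root_.bernoulli i * (n.choose i : ℚ))
      = ((_root_.bernoulli i : ℝ) * (n.choose i : ℝ)) by push_cast; rfl]
  ring

lemma raabe_eval (n d : ℕ) (hd : 0 < d) (t : ℝ) :
    ∑ j ∈ Finset.range d, (Polynomial.aeval ((t + j) / d) (Polynomial.bernoulli n) : ℝ)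
      = (d : ℝ) * ((d : ℝ)⁻¹) ^ n * Polynomial.aeval t (Polynomial.bernoulli n) := by
  have h := congrArg (PowerSeries.coeff (R := ℝ) n) (RaabeAux.raabe_gf d hd t)
  rw [map_sum] at h
  simp only [RaabeAux.B, PowerSeries.coeff_mk, PowerSeries.coeff_C_mul,
    PowerSeries.coeff_rescale, map_smul, Rat.smul_def, Rat.cast_div, Rat.cast_one,
    Rat.cast_natCast] at h
  have hne : ((n.factorial : ℝ)) ≠ 0 := Nat.cast_ne_zero.mpr n.factorial_ne_zero
  rw [← Finset.mul_sum] at h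
  have h2 : (1 / (n.factorial : ℝ)) * (∑ j ∈ Finset.range d,
      (Polynomial.aeval ((t + j) / d) (Polynomial.bernoulli n) : ℝ))
      = (1 / (n.factorial : ℝ)) * ((d : ℝ) * ((d : ℝ)⁻¹) ^ n
          * Polynomial.aeval t (Polynomial.bernoulli n)) := by
    rw [h]; ring
  exact mul_left_cancel₀ (one_div_ne_zero hne) h2

lemma raabe_fun (n d : ℕ) (hd : 0 < d) (t : ℝ) :
    ∑ j ∈ Finset.range d, bernoulliPolyFun n ((t + j) / d)
      = (d : ℝ) ^ ((1 : ℤ) - n) * bernoulliPolyFun n t := by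
  have hd0 : (d : ℝ) ≠ 0 := Nat.cast_ne_zero.mpr hd.ne'
  simp_rw [bernoulliPolyFun_eq_aeval]
  rw [raabe_eval n d hd t]
  congr 1
  rw [zpow_sub₀ hd0, zpow_one, zpow_natCast, div_eq_mul_inv, inv_pow]

end

/-- Multiplication formula for Bernoulli functions:
`∑_{i=0}^{d-1} B̄_n((x+i)/d) = d^{1-n} B̄_n(x)`. -/
theorem bernoulliBar_multiplication (n : ℕ) (d : ℕ) (hd : 0 < d) (x : ℝ) :
    ∑ i ∈ Finset.range d, bernoulliBar n ((x + i) / d) =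
      (d : ℝ) ^ ((1 : ℤ) - n) * bernoulliBar n x := by
  have hd0 : (d : ℝ) ≠ 0 := Nat.cast_ne_zero.mpr hd.ne'
  set a : ℕ := (⌊x⌋ % d).toNat with ha
  have haz : (a : ℤ) = ⌊x⌋ % (d : ℤ) := by
    rw [ha]
    exact Int.toNat_of_nonneg (Int.emod_nonneg _ (by exact_mod_cast hd.ne'))
  have key : ∀ i ∈ Finset.range d, bernoulliBar n ((x + i) / d)
      = bernoulliPolyFun n ((Int.fract x + ((a + i) % d : ℕ)) / d) := by
    intro i hi
    rw [bernoulliBar]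
    congr 1
    set r : ℕ := (a + i) % d with hrdef
    have hrd : r < d := Nat.mod_lt _ hd
    have hr : (r : ℤ) = (⌊x⌋ + i) % d := by
      rw [hrdef]
      push_cast
      rw [haz, Int.add_emod, Int.emod_emod_of_dvd _ dvd_rfl, ← Int.add_emod]
    obtain ⟨q, hq⟩ : ∃ q : ℤ, (⌊x⌋ : ℤ) + i = q * d + r := by
      refine ⟨((⌊x⌋ : ℤ) + i) / d, ?_⟩
      rw [hr]
      rw [mul_comm]
      exact (Int.mul_ediv_add_emod _ _).symm
    have hqR : (⌊x⌋ : ℝ) + i = q * d + r := by exact_mod_cast hq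
    have hx : (x + i) / d = (Int.fract x + r) / d + q := by
      have hf : Int.fract x = x - ⌊x⌋ := rfl
      field_simp
      rw [hf]
      linarith [hqR]
    rw [hx, Int.fract_add_intCast]
    rw [Int.fract_eq_self.mpr ?_]
    constructor
    · have h0 := Int.fract_nonneg x
      have h1 : (0:ℝ) ≤ r := Nat.cast_nonneg r
      positivity
    · rw [div_lt_one (by positivity)]
      have h1 : Int.fract x < 1 := Int.fract_lt_one x
      have h2 : (r : ℝ) ≤ (d : ℝ) - 1 := by
        have : (r : ℝ) + 1 ≤ d := by exact_mod_cast hrd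
        linarith
      linarith
  rw [Finset.sum_congr rfl key]
  rw [sum_shift_mod (fun j => bernoulliPolyFun n ((Int.fract x + j) / d)) d hd a]
  rw [raabe_fun n d hd (Int.fract x)]
  rfl
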